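/- Let n ≥ 1 be an integer and let λ > n² be a real number. Define h : ℝ → ℝ by h(x) = log( n² / ( λ + √(λ² − n⁴)·cos(nx) ) ). Then: (i) h''(x) = −n²·e^{2h(x)} + λ·e^{h(x)} for all x; (ii) ∫₀^{2π} e^{h(x)} dx = 2π; (iii) (1/(2π)) ∫₀^{2π} ( −n²·e^{2h(x)} + h'(x)² ) dx = −n². In particular the value in (iii) is independent of λ. -/

import Mathlib

open Real

/-- Properties of the explicit non-constant critical points: for an integer
`n ≥ 1` and `λ > n²`, the function
`h(x) = log( n² / (λ + √(λ²−n⁴) cos(nx)) )` satisfies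
(i) `h'' = −n² e^{2h} + λ e^{h}`, (ii) `∫₀^{2π} e^{h} = 2π`, and
(iii) `(1/(2π)) ∫₀^{2π} (−n² e^{2h} + h'²) = −n²`, independently of `λ`. -/
theorem explicit_critical_point_properties (n : ℕ) (hn : 1 ≤ n) (lam : ℝ)
    (hlam : (n : ℝ) ^ 2 < lam) (h : ℝ → ℝ)
    (hdef : ∀ x, h x = Real.log ((n : ℝ) ^ 2 /
      (lam + Real.sqrt (lam ^ 2 - (n : ℝ) ^ 4) * Real.cos (n * x)))) :
    (∀ x, deriv (deriv h) x =
        -(n : ℝ) ^ 2 * Real.exp (2 * h x) + lam * Real.exp (h x)) ∧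
      (∫ x in (0:ℝ)..(2 * π), Real.exp (h x)) = 2 * π ∧
      (1 / (2 * π)) * (∫ x in (0:ℝ)..(2 * π),
          (-(n : ℝ) ^ 2 * Real.exp (2 * h x) + (deriv h x) ^ 2)) = -(n : ℝ) ^ 2 := by
  have hnpos : (0:ℝ) < (n:ℝ) := by exact_mod_cast hn
  have hn0 : (n:ℝ) ≠ 0 := hnpos.ne'
  have hlam0 : (0:ℝ) < lam := lt_trans (by positivity) hlam
  set b := Real.sqrt (lam ^ 2 - (n : ℝ) ^ 4) with hbdef
  have hb2 : b ^ 2 = lam ^ 2 - (n:ℝ) ^ 4 := Real.sq_sqrt (by nlinarith)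
  have hbnn : (0:ℝ) ≤ b := Real.sqrt_nonneg _
  have hblt : b < lam := by nlinarith [sq_nonneg (b - lam), pow_pos hnpos 4]
  have hD : ∀ x : ℝ, 0 < lam + b * Real.cos (n * x) := by
    intro x
    nlinarith [mul_le_mul_of_nonneg_left (Real.neg_one_le_cos ((n:ℝ)*x)) hbnn]
  have hE : ∀ x : ℝ, 0 < lam + (n:ℝ)^2 + b * Real.cos (n * x) := by
    intro x
    nlinarith [mul_le_mul_of_nonneg_left (Real.neg_one_le_cos ((n:ℝ)*x)) hbnn]
  have hmul : ∀ x : ℝ, HasDerivAt (fun y : ℝ => (n:ℝ) * y) (n:ℝ) x := by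
    intro x; simpa using (hasDerivAt_id x).const_mul (n:ℝ)
  have hDd : ∀ x : ℝ, HasDerivAt (fun y : ℝ => lam + b * Real.cos (n * y))
      (b * (-Real.sin ((n:ℝ) * x) * n)) x := by
    intro x; exact (((hmul x).cos).const_mul b).const_add lam
  have hfun : h = fun x => Real.log ((n : ℝ) ^ 2 / (lam + b * Real.cos (n * x))) :=
    funext hdef
  subst hfun
  have hsin2 : ∀ x : ℝ, Real.sin ((n:ℝ)*x) ^ 2 = 1 - Real.cos ((n:ℝ)*x) ^ 2 := by
    intro x; nlinarith [Real.sin_sq_add_cos_sq ((n:ℝ)*x)]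
  have hexp : ∀ x : ℝ, Real.exp (Real.log ((n:ℝ)^2 / (lam + b * Real.cos (n * x))))
      = (n:ℝ)^2 / (lam + b * Real.cos (n * x)) := by
    intro x; exact Real.exp_log (div_pos (pow_pos hnpos 2) (hD x))
  have hexp2 : ∀ x : ℝ, Real.exp (2 * Real.log ((n:ℝ)^2 / (lam + b * Real.cos (n * x))))
      = ((n:ℝ)^2 / (lam + b * Real.cos (n * x))) ^ 2 := by
    intro x
    rw [two_mul, Real.exp_add, hexp x]
    ring
  -- first derivative
  have hd1 : ∀ x : ℝ, HasDerivAt (fun y : ℝ => Real.log ((n:ℝ)^2 / (lam + b * Real.cos (n * y))))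
      ((n:ℝ) * b * Real.sin ((n:ℝ)*x) / (lam + b * Real.cos ((n:ℝ)*x))) x := by
    intro x
    have h1 := (hasDerivAt_const x ((n:ℝ)^2)).div (hDd x) (hD x).ne'
    have h2 := h1.log (div_ne_zero (by positivity) (hD x).ne')
    convert h2 using 1
    have hDx := (hD x).ne'
    show _ = _ / ((n:ℝ)^2 / (lam + b * Real.cos ((n:ℝ)*x)))
    field_simp
    ring
    rfl
  have hderiv1 : deriv (fun y : ℝ => Real.log ((n:ℝ)^2 / (lam + b * Real.cos (n * y))))
      = fun x => (n:ℝ) * b * Real.sin ((n:ℝ)*x) / (lam + b * Real.cos ((n:ℝ)*x)) :=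
    funext fun x => (hd1 x).deriv
  -- second derivative
  have hd2 : ∀ x : ℝ, HasDerivAt
      (fun y : ℝ => (n:ℝ) * b * Real.sin ((n:ℝ)*y) / (lam + b * Real.cos ((n:ℝ)*y)))
      (((n:ℝ) * b * (Real.cos ((n:ℝ)*x) * n) * (lam + b * Real.cos ((n:ℝ)*x))
        - (n:ℝ) * b * Real.sin ((n:ℝ)*x) * (b * (-Real.sin ((n:ℝ) * x) * n)))
        / (lam + b * Real.cos ((n:ℝ)*x)) ^ 2) x := by
    intro x
    exact (((hmul x).sin).const_mul ((n:ℝ)*b)).div (hDd x) (hD x).ne'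
  have hs0 : Real.sin ((n:ℝ) * (2*π)) = 0 := by
    have h2n : (n:ℝ) * (2*π) = (2*n : ℕ) * π := by push_cast; ring
    rw [h2n, Real.sin_nat_mul_pi]
  refine ⟨?_, ?_, ?_⟩
  · -- part (i)
    intro x
    rw [hderiv1, (hd2 x).deriv]
    simp only [hexp, hexp2]
    have hDx := (hD x).ne'
    have hnum : (n:ℝ) * b * (Real.cos ((n:ℝ)*x) * n) * (lam + b * Real.cos ((n:ℝ)*x))
        - (n:ℝ) * b * Real.sin ((n:ℝ)*x) * (b * (-Real.sin ((n:ℝ) * x) * n))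
        = -(n:ℝ)^6 + lam * (n:ℝ)^2 * (lam + b * Real.cos ((n:ℝ)*x)) := by
      linear_combination (n:ℝ)^2 * hb2 + (n:ℝ)^2 * b^2 * (hsin2 x)
    have hr : -(n:ℝ)^2 * ((n:ℝ)^2 / (lam + b * Real.cos ((n:ℝ)*x)))^2
        + lam * ((n:ℝ)^2 / (lam + b * Real.cos ((n:ℝ)*x)))
        = (-(n:ℝ)^6 + lam * (n:ℝ)^2 * (lam + b * Real.cos ((n:ℝ)*x)))
          / (lam + b * Real.cos ((n:ℝ)*x))^2 := by
      field_simp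
    rw [hr, hnum]
  · -- part (ii)
    have key : ∀ x : ℝ, HasDerivAt
        (fun y : ℝ => y - (2 / (n:ℝ)) * Real.arctan
          (b * Real.sin ((n:ℝ)*y) / (lam + (n:ℝ)^2 + b * Real.cos ((n:ℝ)*y))))
        ((n:ℝ)^2 / (lam + b * Real.cos ((n:ℝ)*x))) x := by
      intro x
      have hu : HasDerivAt
          (fun y : ℝ => b * Real.sin ((n:ℝ)*y) / (lam + (n:ℝ)^2 + b * Real.cos ((n:ℝ)*y)))
          ((b * (Real.cos ((n:ℝ)*x) * n) * (lam + (n:ℝ)^2 + b * Real.cos ((n:ℝ)*x))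
            - b * Real.sin ((n:ℝ)*x) * (b * (-Real.sin ((n:ℝ) * x) * n)))
            / (lam + (n:ℝ)^2 + b * Real.cos ((n:ℝ)*x)) ^ 2) x := by
        refine (((hmul x).sin).const_mul b).div ?_ (hE x).ne'
        exact (((hmul x).cos).const_mul b).const_add (lam + (n:ℝ)^2)
      have harc := hu.arctan
      have hA := (hasDerivAt_id x).sub (harc.const_mul (2 / (n:ℝ)))
      refine hA.congr_deriv ?_
      have hEx := (hE x).ne'
      have hDx := (hD x).ne'
      have hLx : lam + (n:ℝ)^2 ≠ 0 := (by positivity : (0:ℝ) < lam + (n:ℝ)^2).ne'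
      have hNu : b * (Real.cos ((n:ℝ)*x) * n) * (lam + (n:ℝ)^2 + b * Real.cos ((n:ℝ)*x))
          - b * Real.sin ((n:ℝ)*x) * (b * (-Real.sin ((n:ℝ) * x) * n))
          = (n:ℝ) * (lam + (n:ℝ)^2) * (b * Real.cos ((n:ℝ)*x) + lam - (n:ℝ)^2) := by
        linear_combination (n:ℝ) * hb2 + (n:ℝ) * b^2 * (hsin2 x)
      have h1 : 1 + (b * Real.sin ((n:ℝ)*x) / (lam + (n:ℝ)^2 + b * Real.cos ((n:ℝ)*x)))^2
          = (2 * (lam + (n:ℝ)^2) * (lam + b * Real.cos ((n:ℝ)*x)))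
            / (lam + (n:ℝ)^2 + b * Real.cos ((n:ℝ)*x))^2 := by
        field_simp
        linear_combination hb2 + b^2 * (hsin2 x)
      rw [hNu, h1]
      have h2 : (2:ℝ) * (lam + (n:ℝ)^2) * (lam + b * Real.cos ((n:ℝ)*x)) ≠ 0 := by
        positivity
      field_simp
      ring
    have hcont : Continuous (fun x : ℝ => (n:ℝ)^2 / (lam + b * Real.cos ((n:ℝ)*x))) := by
      apply Continuous.div continuous_const (by fun_prop)
      exact fun x => (hD x).ne'
    have heq : (fun x : ℝ => Real.exp (Real.log ((n:ℝ)^2 / (lam + b * Real.cos (n * x)))))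
        = fun x : ℝ => (n:ℝ)^2 / (lam + b * Real.cos ((n:ℝ)*x)) := funext hexp
    simp only [heq]
    rw [intervalIntegral.integral_eq_sub_of_hasDerivAt (fun x _ => key x)
      (hcont.intervalIntegrable 0 (2*π))]
    simp only [hs0, Real.sin_zero, mul_zero, zero_div, Real.arctan_zero, sub_zero,
      zero_sub, neg_zero]
  · -- part (iii)
    simp only [hderiv1]
    have hptw : ∀ x : ℝ,
        -(n:ℝ)^2 * Real.exp (2 * Real.log ((n:ℝ)^2 / (lam + b * Real.cos (n * x))))
          + ((n:ℝ) * b * Real.sin ((n:ℝ)*x) / (lam + b * Real.cos ((n:ℝ)*x)))^2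
        = 2 * (((n:ℝ) * b * (Real.cos ((n:ℝ)*x) * n) * (lam + b * Real.cos ((n:ℝ)*x))
            - (n:ℝ) * b * Real.sin ((n:ℝ)*x) * (b * (-Real.sin ((n:ℝ) * x) * n)))
            / (lam + b * Real.cos ((n:ℝ)*x)) ^ 2) - (n:ℝ)^2 := by
      intro x
      rw [hexp2 x]
      have hDx := (hD x).ne'
      have e1 : -(n:ℝ)^2 * ((n:ℝ)^2 / (lam + b * Real.cos ((n:ℝ)*x)))^2
          + ((n:ℝ) * b * Real.sin ((n:ℝ)*x) / (lam + b * Real.cos ((n:ℝ)*x)))^2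
          = (-(n:ℝ)^6 + (n:ℝ)^2 * b^2 * Real.sin ((n:ℝ)*x)^2)
            / (lam + b * Real.cos ((n:ℝ)*x))^2 := by
        field_simp
      have e2 : 2 * (((n:ℝ) * b * (Real.cos ((n:ℝ)*x) * n) * (lam + b * Real.cos ((n:ℝ)*x))
            - (n:ℝ) * b * Real.sin ((n:ℝ)*x) * (b * (-Real.sin ((n:ℝ) * x) * n)))
            / (lam + b * Real.cos ((n:ℝ)*x)) ^ 2) - (n:ℝ)^2
          = (2 * ((n:ℝ) * b * (Real.cos ((n:ℝ)*x) * n) * (lam + b * Real.cos ((n:ℝ)*x))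
            - (n:ℝ) * b * Real.sin ((n:ℝ)*x) * (b * (-Real.sin ((n:ℝ) * x) * n)))
            - (n:ℝ)^2 * (lam + b * Real.cos ((n:ℝ)*x))^2)
            / (lam + b * Real.cos ((n:ℝ)*x))^2 := by
        field_simp
      rw [e1, e2]
      have hnum3 : -(n:ℝ)^6 + (n:ℝ)^2 * b^2 * Real.sin ((n:ℝ)*x)^2
          = 2 * ((n:ℝ) * b * (Real.cos ((n:ℝ)*x) * n) * (lam + b * Real.cos ((n:ℝ)*x))
            - (n:ℝ) * b * Real.sin ((n:ℝ)*x) * (b * (-Real.sin ((n:ℝ) * x) * n)))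
            - (n:ℝ)^2 * (lam + b * Real.cos ((n:ℝ)*x))^2 := by
        linear_combination (-(n:ℝ)^2) * hb2 + (-(n:ℝ)^2 * b^2) * (hsin2 x)
      rw [hnum3]
    have hG : ∀ x : ℝ, HasDerivAt
        (fun y : ℝ => 2 * ((n:ℝ) * b * Real.sin ((n:ℝ)*y) / (lam + b * Real.cos ((n:ℝ)*y)))
          - (n:ℝ)^2 * y)
        (-(n:ℝ)^2 * Real.exp (2 * Real.log ((n:ℝ)^2 / (lam + b * Real.cos (n * x))))
          + ((n:ℝ) * b * Real.sin ((n:ℝ)*x) / (lam + b * Real.cos ((n:ℝ)*x)))^2) x := by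
      intro x
      rw [hptw x]
      exact ((hd2 x).const_mul 2).sub (by simpa using (hasDerivAt_id x).const_mul ((n:ℝ)^2))
    have hcont2 : Continuous (fun x : ℝ =>
        -(n:ℝ)^2 * Real.exp (2 * Real.log ((n:ℝ)^2 / (lam + b * Real.cos (n * x))))
          + ((n:ℝ) * b * Real.sin ((n:ℝ)*x) / (lam + b * Real.cos ((n:ℝ)*x)))^2) := by
      have heq2 : (fun x : ℝ =>
          -(n:ℝ)^2 * Real.exp (2 * Real.log ((n:ℝ)^2 / (lam + b * Real.cos (n * x))))
            + ((n:ℝ) * b * Real.sin ((n:ℝ)*x) / (lam + b * Real.cos ((n:ℝ)*x)))^2)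
          = (fun x : ℝ =>
          -(n:ℝ)^2 * (((n:ℝ)^2 / (lam + b * Real.cos (n * x)))^2)
            + ((n:ℝ) * b * Real.sin ((n:ℝ)*x) / (lam + b * Real.cos ((n:ℝ)*x)))^2) := by
        funext x; rw [hexp2 x]
      rw [heq2]
      apply Continuous.add
      · apply Continuous.mul continuous_const
        apply Continuous.pow
        exact Continuous.div continuous_const (by fun_prop) (fun x => (hD x).ne')
      · apply Continuous.pow
        exact Continuous.div (by fun_prop) (by fun_prop) (fun x => (hD x).ne')
    rw [intervalIntegral.integral_eq_sub_of_hasDerivAt (fun x _ => hG x)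
      (hcont2.intervalIntegrable 0 (2*π))]
    simp only [hs0, Real.sin_zero, mul_zero, zero_div, zero_sub, sub_zero, neg_zero,
      zero_mul, sub_zero]
    have hpi : (π:ℝ) ≠ 0 := Real.pi_ne_zero
    field_simp
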